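/- arXiv:2503.15054 — 3 statements merged into one kernel-verified Lean document; each statement's English description precedes it below -/
import Mathlib

section
/- Let M ∈ ℂ^{n×n} and Z ∈ ℂ^{m×m} be Hermitian matrices, let X_t ∈ ℂ^{m×n}, and let λ ∈ ℝ be such that λ·I_{mn} − Mᵀ ⊗ Z is positive semidefinite, where ⊗ denotes the Kronecker product. Then for every X ∈ ℂ^{m×n}: Re tr(Z X M Xᴴ) ≤ λ‖X‖_F² + 2 Re tr((Z X_t M − λ X_t)ᴴ X) + Re tr(X_tᴴ (λ X_t − Z X_t M)), and equality holds when X = X_t. -/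
open Matrix
open scoped Kronecker ComplexOrder

private lemma sum_rot' {α : Type*} [AddCommMonoid α] {a b c : ℕ} (f : Fin a → Fin b → Fin c → α) :
    ∑ x, ∑ y, ∑ z, f x y z = ∑ z, ∑ x, ∑ y, f x y z := by
  calc ∑ x, ∑ y, ∑ z, f x y z
      = ∑ x, ∑ z, ∑ y, f x y z := Finset.sum_congr rfl fun x _ => Finset.sum_comm
    _ = ∑ z, ∑ x, ∑ y, f x y z := Finset.sum_comm

private lemma kron_quad {m n : ℕ} (M : Matrix (Fin n) (Fin n) ℂ) (Z : Matrix (Fin m) (Fin m) ℂ)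
    (Y : Matrix (Fin m) (Fin n) ℂ) :
    star (fun p : Fin n × Fin m => Y p.2 p.1) ⬝ᵥ ((Mᵀ ⊗ₖ Z) *ᵥ (fun p : Fin n × Fin m => Y p.2 p.1))
      = (Yᴴ * Z * Y * M).trace := by
  simp only [dotProduct, mulVec, Matrix.trace, Matrix.mul_apply, Matrix.diag,
    kroneckerMap_apply, Fintype.sum_prod_type, Finset.mul_sum, Finset.sum_mul,
    Pi.star_apply, transpose_apply, conjTranspose_apply, RCLike.star_def]
  refine Finset.sum_congr rfl fun x _ => ?_
  rw [sum_rot' (fun c d b => (starRingEnd ℂ) (Y b x) * Z b d * Y d c * M c x)]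
  refine Finset.sum_congr rfl fun b _ => Finset.sum_congr rfl fun c _ =>
    Finset.sum_congr rfl fun d _ => by ring

private lemma id_quad {m n : ℕ} (Y : Matrix (Fin m) (Fin n) ℂ) :
    star (fun p : Fin n × Fin m => Y p.2 p.1) ⬝ᵥ (fun p : Fin n × Fin m => Y p.2 p.1)
      = (Yᴴ * Y).trace := by
  simp only [dotProduct, Matrix.trace, Matrix.mul_apply, Matrix.diag, Fintype.sum_prod_type,
    Pi.star_apply, conjTranspose_apply, RCLike.star_def]

/-- Squared Frobenius norm: `‖A‖_F² = tr(Aᴴ A)` (a real number). -/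
noncomputable def frobNormSq {m n : ℕ} (A : Matrix (Fin m) (Fin n) ℂ) : ℝ :=
  (Aᴴ * A).trace.re

/-- majorization lemma for `Re tr(Z X M Xᴴ)`.
If `M`, `Z` are Hermitian and `λ I_{mn} - Mᵀ ⊗ Z` is positive semidefinite, then for every `X`,
`Re tr(Z X M Xᴴ) ≤ λ‖X‖_F² + 2 Re tr((Z Xₜ M − λ Xₜ)ᴴ X) + Re tr(Xₜᴴ (λ Xₜ − Z Xₜ M))`,
with equality at `X = Xₜ`. -/
theorem stmt_0 {m n : ℕ} (M : Matrix (Fin n) (Fin n) ℂ) (Z : Matrix (Fin m) (Fin m) ℂ)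
    (hM : M.IsHermitian) (hZ : Z.IsHermitian) (Xt : Matrix (Fin m) (Fin n) ℂ) (lam : ℝ)
    (hPSD : ((lam : ℂ) • (1 : Matrix (Fin n × Fin m) (Fin n × Fin m) ℂ) - Mᵀ ⊗ₖ Z).PosSemidef) :
    (∀ X : Matrix (Fin m) (Fin n) ℂ,
      (Z * X * M * Xᴴ).trace.re ≤
        lam * frobNormSq X + 2 * ((Z * Xt * M - (lam : ℂ) • Xt)ᴴ * X).trace.re
          + (Xtᴴ * ((lam : ℂ) • Xt - Z * Xt * M)).trace.re) ∧
    ((Z * Xt * M * Xtᴴ).trace.re =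
        lam * frobNormSq Xt + 2 * ((Z * Xt * M - (lam : ℂ) • Xt)ᴴ * Xt).trace.re
          + (Xtᴴ * ((lam : ℂ) • Xt - Z * Xt * M)).trace.re) := by
  -- the PSD quadratic-form inequality for any Y
  have key : ∀ Y : Matrix (Fin m) (Fin n) ℂ,
      0 ≤ lam * (Yᴴ * Y).trace.re - (Yᴴ * Z * Y * M).trace.re := by
    intro Y
    have h := hPSD.dotProduct_mulVec_nonneg (fun p : Fin n × Fin m => Y p.2 p.1)
    rw [sub_mulVec, dotProduct_sub, smul_mulVec, one_mulVec, dotProduct_smul,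
      kron_quad M Z Y, id_quad Y] at h
    have h' := (Complex.le_def.mp h).1
    simpa [Complex.sub_re, Complex.mul_re] using h'
  -- cyclic rewriting of traces
  have cyc : ∀ X : Matrix (Fin m) (Fin n) ℂ,
      (M * (Xtᴴ * (Z * X))).trace = (Xtᴴ * Z * X * M).trace := by
    intro X
    rw [trace_mul_comm, ← Matrix.mul_assoc]
  have r2 : ∀ X : Matrix (Fin m) (Fin n) ℂ,
      (Xᴴ * Z * Xt * M).trace.re = (Xtᴴ * Z * X * M).trace.re := by
    intro X
    have h1 : (Xᴴ * Z * Xt * M)ᴴ = M * (Xtᴴ * (Z * X)) := by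
      simp [conjTranspose_mul, hM.eq, hZ.eq, mul_assoc]
    have h2 : (Xᴴ * Z * Xt * M).trace = star ((M * (Xtᴴ * (Z * X))).trace) := by
      rw [← h1, trace_conjTranspose, star_star]
    rw [← cyc X]
    have := congrArg Complex.re h2
    simp only [Complex.star_def, Complex.conj_re] at this
    linarith [this]
  have r1 : ∀ X : Matrix (Fin m) (Fin n) ℂ,
      (Xᴴ * Xt).trace.re = (Xtᴴ * X).trace.re := by
    intro X
    have h1 : (Xᴴ * Xt)ᴴ = Xtᴴ * X := by simp [conjTranspose_mul]
    have h2 : (Xtᴴ * X).trace = star ((Xᴴ * Xt).trace) := by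
      rw [← h1, trace_conjTranspose]
    have := congrArg Complex.re h2
    simp only [Complex.star_def, Complex.conj_re] at this
    linarith [this]
  have lhs0 : ∀ X : Matrix (Fin m) (Fin n) ℂ,
      (Z * X * M * Xᴴ).trace = (Xᴴ * Z * X * M).trace := by
    intro X
    rw [trace_mul_comm, ← Matrix.mul_assoc, ← Matrix.mul_assoc]
  have rhs1 : ∀ X : Matrix (Fin m) (Fin n) ℂ,
      ((Z * Xt * M - (lam : ℂ) • Xt)ᴴ * X).trace
        = (Xtᴴ * Z * X * M).trace - (lam : ℂ) * (Xtᴴ * X).trace := by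
    intro X
    rw [conjTranspose_sub, Matrix.sub_mul, trace_sub, ← cyc X]
    congr 1
    · rw [show (Z * Xt * M)ᴴ = M * (Xtᴴ * Z) by
        simp [conjTranspose_mul, hM.eq, hZ.eq, Matrix.mul_assoc]]
      rw [Matrix.mul_assoc, Matrix.mul_assoc]
    · rw [conjTranspose_smul]
      simp [trace_smul, smul_eq_mul, Matrix.smul_mul]
  have rhs2 : (Xtᴴ * ((lam : ℂ) • Xt - Z * Xt * M)).trace
      = (lam : ℂ) * (Xtᴴ * Xt).trace - (Xtᴴ * Z * Xt * M).trace := by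
    rw [Matrix.mul_sub, trace_sub]
    congr 1
    · simp [Matrix.mul_smul, trace_smul, smul_eq_mul]
    · rw [← Matrix.mul_assoc, ← Matrix.mul_assoc]
  -- trace expansions of the difference
  have e1 : ∀ X : Matrix (Fin m) (Fin n) ℂ, ((X - Xt)ᴴ * (X - Xt)).trace
      = (Xᴴ * X).trace - (Xᴴ * Xt).trace - (Xtᴴ * X).trace + (Xtᴴ * Xt).trace := by
    intro X
    simp only [conjTranspose_sub, Matrix.sub_mul, Matrix.mul_sub, trace_sub]
    ring
  have e2 : ∀ X : Matrix (Fin m) (Fin n) ℂ, ((X - Xt)ᴴ * Z * (X - Xt) * M).trace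
      = (Xᴴ * Z * X * M).trace - (Xᴴ * Z * Xt * M).trace
        - (Xtᴴ * Z * X * M).trace + (Xtᴴ * Z * Xt * M).trace := by
    intro X
    simp only [conjTranspose_sub, Matrix.sub_mul, Matrix.mul_sub, trace_sub]
    ring
  have main : ∀ X : Matrix (Fin m) (Fin n) ℂ,
      (Z * X * M * Xᴴ).trace.re ≤
        lam * frobNormSq X + 2 * ((Z * Xt * M - (lam : ℂ) • Xt)ᴴ * X).trace.re
          + (Xtᴴ * ((lam : ℂ) • Xt - Z * Xt * M)).trace.re := by
    intro X
    have hk := key (X - Xt)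
    have he1 := congrArg Complex.re (e1 X)
    have he2 := congrArg Complex.re (e2 X)
    have hl := congrArg Complex.re (lhs0 X)
    have hr1 := congrArg Complex.re (rhs1 X)
    have hr2 := congrArg Complex.re rhs2
    simp only [Complex.sub_re, Complex.add_re, Complex.mul_re, Complex.ofReal_re,
      Complex.ofReal_im, zero_mul, sub_zero] at he1 he2 hl hr1 hr2
    have hq1 := r1 X
    have hq2 := r2 X
    unfold frobNormSq
    rw [hl, hr1, hr2]
    rw [he1, he2, hq1, hq2] at hk
    ring_nf at hk ⊢
    linarith
  refine ⟨main, ?_⟩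
  have hk := main Xt
  have hr1 := congrArg Complex.re (rhs1 Xt)
  have hr2 := congrArg Complex.re rhs2
  have hl := congrArg Complex.re (lhs0 Xt)
  simp only [Complex.sub_re, Complex.mul_re, Complex.ofReal_re, Complex.ofReal_im,
    zero_mul, sub_zero] at hr1 hr2 hl
  unfold frobNormSq
  rw [hl, hr1, hr2]
  ring
end

section
/- Let ρ > 0, β > 0, ξ > 0, and A, C₀ ∈ ℂ^{m×n}. Define C̃ = (ρ A + β C₀)/(ρ + β), and set C* = C̃ if ‖C̃‖_F ≤ ξ, and C* = (ξ / ‖C̃‖_F) · C̃ otherwise. Then ‖C*‖_F ≤ ξ, and for every C ∈ ℂ^{m×n} with ‖C‖_F ≤ ξ: (ρ/2)‖A − C*‖_F² + (β/2)‖C* − C₀‖_F² ≤ (ρ/2)‖A − C‖_F² + (β/2)‖C − C₀‖_F². That is, C* is a global minimizer of the proximal-regularized objective over the Frobenius-norm ball of radius ξ. -/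
open Matrix

/-- Frobenius norm: `‖A‖_F = √(tr(Aᴴ A))`. -/
noncomputable def frobNorm {m n : ℕ} (A : Matrix (Fin m) (Fin n) ℂ) : ℝ :=
  Real.sqrt ((Aᴴ * A).trace.re)

/-- Abstract projection lemma in a real inner product space. -/
lemma key_proj {E : Type} [NormedAddCommGroup E] [InnerProductSpace ℝ E]
    (ρ β ξ : ℝ) (hρ : 0 < ρ) (hβ : 0 < β) (hξ : 0 < ξ) (a c₀ ct cstar : E)
    (hct : (ρ + β) • ct = ρ • a + β • c₀)
    (hcs : cstar = if ‖ct‖ ≤ ξ then ct else (ξ / ‖ct‖) • ct) :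
    ‖cstar‖ ≤ ξ ∧ ∀ c : E, ‖c‖ ≤ ξ →
      ρ / 2 * ‖a - cstar‖ ^ 2 + β / 2 * ‖cstar - c₀‖ ^ 2 ≤
        ρ / 2 * ‖a - c‖ ^ 2 + β / 2 * ‖c - c₀‖ ^ 2 := by
  have ht : 0 < ρ + β := by linarith
  have expand : ∀ c : E, ρ * ‖a - c‖ ^ 2 + β * ‖c - c₀‖ ^ 2 =
      (ρ + β) * ‖c - ct‖ ^ 2 + (ρ * ‖a‖ ^ 2 + β * ‖c₀‖ ^ 2 - (ρ + β) * ‖ct‖ ^ 2) := by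
    intro c
    have h2 : ρ * (inner ℝ a c : ℝ) + β * (inner ℝ c c₀ : ℝ) = (ρ + β) * (inner ℝ c ct : ℝ) := by
      have h3 := congrArg (fun x => (inner ℝ c x : ℝ)) hct
      simp only [inner_add_right, real_inner_smul_right] at h3
      have h4 : (inner ℝ a c : ℝ) = inner ℝ c a := real_inner_comm c a
      linear_combination ρ * h4 - h3
    rw [norm_sub_sq_real, norm_sub_sq_real, norm_sub_sq_real]
    linear_combination (-2 : ℝ) * h2
  have hns : ‖cstar‖ ≤ ξ := by
    rw [hcs]
    split_ifs with h
    · exact h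
    · push_neg at h
      have hpos : 0 < ‖ct‖ := lt_trans hξ h
      rw [norm_smul, Real.norm_eq_abs, abs_of_pos (div_pos hξ hpos),
        div_mul_cancel₀ _ (ne_of_gt hpos)]
  refine ⟨hns, fun c hc => ?_⟩
  have hkey : ‖cstar - ct‖ ≤ ‖c - ct‖ := by
    rw [hcs]
    split_ifs with h
    · simpa using norm_nonneg (c - ct)
    · push_neg at h
      have hpos : 0 < ‖ct‖ := lt_trans hξ h
      have e1 : (ξ / ‖ct‖) • ct - ct = (ξ / ‖ct‖ - 1) • ct := by
        rw [sub_smul, one_smul]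
      rw [e1, norm_smul, Real.norm_eq_abs,
        abs_of_neg (by rw [sub_neg, div_lt_one hpos]; exact h)]
      have e2 : -(ξ / ‖ct‖ - 1) * ‖ct‖ = ‖ct‖ - ξ := by
        field_simp
        ring
      rw [e2]
      have : ‖ct‖ - ‖c‖ ≤ ‖ct - c‖ := norm_sub_norm_le ct c
      rw [norm_sub_rev] at this
      linarith
  have hsq : ‖cstar - ct‖ ^ 2 ≤ ‖c - ct‖ ^ 2 :=
    pow_le_pow_left₀ (norm_nonneg _) hkey 2
  have := mul_le_mul_of_nonneg_left hsq (le_of_lt ht)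
  have e1 := expand c
  have e2 := expand cstar
  linarith

noncomputable def toE {m n : ℕ} (A : Matrix (Fin m) (Fin n) ℂ) : EuclideanSpace ℂ (Fin m × Fin n) :=
  (WithLp.equiv 2 _).symm fun p => A p.1 p.2

lemma frob_eq_norm {m n : ℕ} (A : Matrix (Fin m) (Fin n) ℂ) : frobNorm A = ‖toE A‖ := by
  rw [frobNorm, EuclideanSpace.norm_eq]
  congr 1
  have htr : (Aᴴ * A).trace = ∑ j, ∑ i, (starRingEnd ℂ) (A i j) * A i j := by
    simp [Matrix.trace, Matrix.diag, Matrix.mul_apply, Matrix.conjTranspose_apply]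
  rw [htr, Fintype.sum_prod_type_right, Complex.re_sum]
  refine Finset.sum_congr rfl fun j _ => ?_
  rw [Complex.re_sum]
  refine Finset.sum_congr rfl fun i _ => ?_
  have h1 : (starRingEnd ℂ) (A i j) * A i j = ((Complex.normSq (A i j) : ℝ) : ℂ) := by
    rw [mul_comm, Complex.mul_conj]
  rw [h1]
  simp [toE, Complex.normSq_eq_norm_sq, sq_abs, ← Complex.ofReal_pow]

/-- with `C̃ = (ρA + βC₀)/(ρ+β)` and `C*` its projection onto the Frobenius
ball of radius `ξ`, the matrix `C*` globally minimizes
`(ρ/2)‖A − C‖_F² + (β/2)‖C − C₀‖_F²` over `{C : ‖C‖_F ≤ ξ}`. -/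
theorem stmt_6 {m n : ℕ} (ρ β ξ : ℝ) (hρ : 0 < ρ) (hβ : 0 < β) (hξ : 0 < ξ)
    (A C₀ Ct Cstar : Matrix (Fin m) (Fin n) ℂ)
    (hCt : Ct = ((1 / (ρ + β) : ℝ) : ℂ) • ((ρ : ℂ) • A + (β : ℂ) • C₀))
    (hCstar : Cstar = if frobNorm Ct ≤ ξ then Ct else ((ξ / frobNorm Ct : ℝ) : ℂ) • Ct) :
    frobNorm Cstar ≤ ξ ∧
    ∀ C : Matrix (Fin m) (Fin n) ℂ, frobNorm C ≤ ξ →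
      ρ / 2 * frobNorm (A - Cstar) ^ 2 + β / 2 * frobNorm (Cstar - C₀) ^ 2 ≤
        ρ / 2 * frobNorm (A - C) ^ 2 + β / 2 * frobNorm (C - C₀) ^ 2 := by
  have ht : (0:ℝ) < ρ + β := by linarith
  letI : InnerProductSpace ℝ (EuclideanSpace ℂ (Fin m × Fin n)) :=
    InnerProductSpace.rclikeToReal ℂ _
  have hsmul : ∀ (r : ℝ) (X : Matrix (Fin m) (Fin n) ℂ),
      toE ((r : ℂ) • X) = r • toE X := fun r X => rfl
  have hadd : ∀ X Y : Matrix (Fin m) (Fin n) ℂ, toE (X + Y) = toE X + toE Y := fun X Y => rfl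
  have hsub : ∀ X Y : Matrix (Fin m) (Fin n) ℂ, toE (X - Y) = toE X - toE Y := fun X Y => rfl
  have hct2 : (ρ + β) • toE Ct = ρ • toE A + β • toE C₀ := by
    rw [← hsmul, ← hsmul, ← hsmul, ← hadd, hCt]
    congr 1
    rw [smul_smul]
    push_cast
    rw [mul_one_div, div_self (by exact_mod_cast ne_of_gt ht), one_smul]
  have hcs2 : toE Cstar = if ‖toE Ct‖ ≤ ξ then toE Ct else (ξ / ‖toE Ct‖) • toE Ct := by
    rw [hCstar, ← frob_eq_norm]
    split_ifs with h
    · rfl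
    · rw [← hsmul]
  obtain ⟨h1, h2⟩ := key_proj ρ β ξ hρ hβ hξ (toE A) (toE C₀) (toE Ct) (toE Cstar) hct2 hcs2
  refine ⟨by rw [frob_eq_norm]; exact h1, fun C hC => ?_⟩
  have := h2 (toE C) (by rw [← frob_eq_norm]; exact hC)
  simpa only [frob_eq_norm, hsub] using this
end

section
/- Let E be a finite-dimensional real inner product space, let f : E → ℝ be differentiable with gradient ∇f satisfying ‖∇f(x) − ∇f(y)‖ ≤ L‖x − y‖ for all x, y ∈ E (L ≥ 0), let S ⊆ E, let λ > L, let x ∈ S, and let x⁺ ∈ S satisfy ⟨∇f(x), x⁺ − x⟩ + (λ/2)‖x⁺ − x‖² ≤ ⟨∇f(x), y − x⟩ + (λ/2)‖y − x‖² for all y ∈ S (i.e., x⁺ minimizes the proximal linearization of f at x over S). Then f(x) − f(x⁺) ≥ ((λ − L)/2)·‖x⁺ − x‖². -/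
open InnerProductSpace

lemma descent_lemma {E : Type*} [NormedAddCommGroup E] [InnerProductSpace ℝ E] [CompleteSpace E]
    (f : E → ℝ) (hf : Differentiable ℝ f) (L : ℝ)
    (hLip : ∀ x y : E, ‖gradient f x - gradient f y‖ ≤ L * ‖x - y‖)
    (x y : E) :
    f y ≤ f x + (inner ℝ (gradient f x) (y - x) : ℝ) + L / 2 * ‖y - x‖ ^ 2 := by
  set v := y - x with hv
  set φ : ℝ → ℝ := fun t =>
    f (x + t • v) - t * (inner ℝ (gradient f x) v : ℝ) - L * t ^ 2 / 2 * ‖v‖ ^ 2 with hφ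
  have key : ∀ t : ℝ, HasDerivAt φ
      ((inner ℝ (gradient f (x + t • v)) v : ℝ) - (inner ℝ (gradient f x) v : ℝ)
        - L * t * ‖v‖ ^ 2) t := by
    intro t
    have hline : HasDerivAt (fun t : ℝ => x + t • v) v t := by
      simpa using (hasDerivAt_id t).smul_const v |>.const_add x
    have hgrad := (hf (x + t • v)).hasGradientAt
    have hcomp : HasDerivAt (fun t : ℝ => f (x + t • v))
        ((inner ℝ (gradient f (x + t • v)) v : ℝ)) t := by
      have := hgrad.hasFDerivAt.comp_hasDerivAt t hline
      exact this.congr_deriv (by simp [InnerProductSpace.toDual_apply_apply])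
    have h2 : HasDerivAt (fun t : ℝ => t * (inner ℝ (gradient f x) v : ℝ))
        ((inner ℝ (gradient f x) v : ℝ)) t := by
      simpa using (hasDerivAt_id t).mul_const ((inner ℝ (gradient f x) v : ℝ))
    have h3 : HasDerivAt (fun t : ℝ => L * t ^ 2 / 2 * ‖v‖ ^ 2)
        (L * t * ‖v‖ ^ 2) t := by
      have : HasDerivAt (fun t : ℝ => t ^ 2) (2 * t) t := by
        simpa using hasDerivAt_pow 2 t
      have := ((this.const_mul L).div_const 2).mul_const (‖v‖ ^ 2)
      exact this.congr_deriv (by ring)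
    exact (hcomp.sub h2).sub h3
  have hmono : AntitoneOn φ (Set.Icc 0 1) := by
    apply antitoneOn_of_deriv_nonpos (convex_Icc 0 1)
    · exact Continuous.continuousOn (by
        have : Continuous φ := by
          apply Continuous.sub
          apply Continuous.sub
          · exact hf.continuous.comp (by continuity)
          · continuity
          · continuity
        exact this)
    · intro t ht
      exact (key t).differentiableAt.differentiableWithinAt
    · intro t ht
      rw [interior_Icc] at ht
      rw [(key t).deriv]
      have h1 : (inner ℝ (gradient f (x + t • v)) v : ℝ) - (inner ℝ (gradient f x) v : ℝ)
          = (inner ℝ (gradient f (x + t • v) - gradient f x) v : ℝ) := by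
        rw [inner_sub_left]
      rw [h1]
      have h2 : (inner ℝ (gradient f (x + t • v) - gradient f x) v : ℝ)
          ≤ ‖gradient f (x + t • v) - gradient f x‖ * ‖v‖ :=
        real_inner_le_norm _ _
      have h3 : ‖gradient f (x + t • v) - gradient f x‖ ≤ L * (t * ‖v‖) := by
        have := hLip (x + t • v) x
        simpa [norm_smul, abs_of_pos ht.1, mul_assoc] using this
      have hv0 : (0:ℝ) ≤ ‖v‖ := norm_nonneg v
      nlinarith [norm_nonneg (gradient f (x + t • v) - gradient f x)]
  have h01 : φ 1 ≤ φ 0 := hmono (by norm_num) (by norm_num) (by norm_num)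
  have e1 : x + (1:ℝ) • v = y := by simp [hv]
  have e0 : x + (0:ℝ) • v = x := by simp
  simp only [hφ, e1, e0, one_smul, zero_smul, add_zero, one_mul, one_pow, zero_pow,
    mul_zero, zero_mul, sub_zero, mul_one] at h01
  have : f y - (inner ℝ (gradient f x) v : ℝ) - L * 1 / 2 * ‖v‖ ^ 2 ≤ f x := by
    have exy : x + v = y := by simp [hv]
    rw [exy] at h01
    simpa using h01
  linarith

/-- sufficient decrease of a proximal linearization step.
If `∇f` is `L`-Lipschitz, `λ > L`, and `x⁺ ∈ S` minimizes
`y ↦ ⟨∇f(x), y − x⟩ + (λ/2)‖y − x‖²` over `S ∋ x`, then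
`f(x) − f(x⁺) ≥ ((λ − L)/2)‖x⁺ − x‖²`. -/
theorem stmt_8 {E : Type*} [NormedAddCommGroup E] [InnerProductSpace ℝ E]
    [FiniteDimensional ℝ E] (f : E → ℝ) (hf : Differentiable ℝ f)
    (L : ℝ) (hL : 0 ≤ L)
    (hLip : ∀ x y : E, ‖gradient f x - gradient f y‖ ≤ L * ‖x - y‖)
    (S : Set E) (lam : ℝ) (hlam : L < lam) (x xp : E) (hx : x ∈ S) (hxp : xp ∈ S)
    (hmin : ∀ y ∈ S,
      (inner ℝ (gradient f x) (xp - x) : ℝ) + lam / 2 * ‖xp - x‖ ^ 2 ≤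
        (inner ℝ (gradient f x) (y - x) : ℝ) + lam / 2 * ‖y - x‖ ^ 2) :
    (lam - L) / 2 * ‖xp - x‖ ^ 2 ≤ f x - f xp := by
  have hdesc := descent_lemma f hf L hLip x xp
  have hmin0 := hmin x hx
  simp only [sub_self, inner_zero_right, norm_zero] at hmin0
  -- hmin0 : ⟪∇f x, xp - x⟫ + lam/2 ‖xp-x‖² ≤ 0
  nlinarith [hmin0, hdesc]
end
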